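/- With the randomized Arnoldi relation AV_m = V_{m+1}Ḡ_m and b = βV_{m+1}e₁, if Ω is an ε-embedding of K_{m+1} = range(V_{m+1}), then the sketched-GMRES solution x^G = V_m y^G with y^G minimizing ‖Ḡ_m y - βe₁‖ achieves a quasi-optimal residual: ‖b - A x^G‖ ≤ √((1+ε)/(1-ε)) · min_{x ∈ range(V_m)} ‖b - Ax‖. -/
import Mathlib

open Matrix

noncomputable def eunorm {k : ℕ} (x : Fin k → ℝ) : ℝ := Real.sqrt (x ⬝ᵥ x)

/-- The canonical basis vector e₁ of ℝ^{m+1}. -/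
def e1 (m : ℕ) : Fin (m + 1) → ℝ := Pi.single 0 1

lemma dp_nonneg {k : ℕ} (x : Fin k → ℝ) : 0 ≤ x ⬝ᵥ x :=
  Finset.sum_nonneg fun i _ => mul_self_nonneg (x i)

lemma eunorm_nonneg {k : ℕ} (x : Fin k → ℝ) : 0 ≤ eunorm x := Real.sqrt_nonneg _

lemma eunorm_sq {k : ℕ} (x : Fin k → ℝ) : eunorm x ^ 2 = x ⬝ᵥ x :=
  Real.sq_sqrt (dp_nonneg x)

lemma eunorm_neg {k : ℕ} (x : Fin k → ℝ) : eunorm (-x) = eunorm x := by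
  unfold eunorm; rw [dotProduct_neg, neg_dotProduct, neg_neg]

/-- With AV_m = V_{m+1}Ḡ_m, b = βV_{m+1}e₁ and Ω an ε-embedding of range(V_{m+1}),
the sketched-GMRES solution x^G = V_m y^G, with y^G minimizing ‖Ḡ_m y - βe₁‖, achieves a
quasi-optimal residual: ‖b - Ax^G‖ ≤ √((1+ε)/(1-ε)) · min_{x ∈ range(V_m)} ‖b - Ax‖. -/
theorem stmt14 {n m l : ℕ} (A : Matrix (Fin n) (Fin n) ℝ)
    (V : Matrix (Fin n) (Fin (m + 1)) ℝ) (G : Matrix (Fin (m + 1)) (Fin m) ℝ)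
    (Ω : Matrix (Fin l) (Fin n) ℝ) (β : ℝ) (yG : Fin m → ℝ)
    (ε : ℝ) (hε0 : 0 < ε) (hε1 : ε < 1)
    (horth : (Ω * V)ᵀ * (Ω * V) = 1)
    (harnoldi : A * V.submatrix id Fin.castSucc = V * G)
    (hemb : ∀ w ∈ LinearMap.range V.mulVecLin,
      (1 - ε) * eunorm w ^ 2 ≤ eunorm (Ω.mulVec w) ^ 2 ∧
      eunorm (Ω.mulVec w) ^ 2 ≤ (1 + ε) * eunorm w ^ 2)
    (hmin : ∀ y : Fin m → ℝ,
      eunorm (G.mulVec yG - β • e1 m) ≤ eunorm (G.mulVec y - β • e1 m)) :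
    ∀ y : Fin m → ℝ,
      eunorm (β • V.mulVec (e1 m) - A.mulVec ((V.submatrix id Fin.castSucc).mulVec yG)) ≤
        Real.sqrt ((1 + ε) / (1 - ε)) *
          eunorm (β • V.mulVec (e1 m) - A.mulVec ((V.submatrix id Fin.castSucc).mulVec y)) := by
  intro y
  -- residual identity
  have hr : ∀ z : Fin m → ℝ,
      β • V.mulVec (e1 m) - A.mulVec ((V.submatrix id Fin.castSucc).mulVec z)
        = V.mulVec (β • e1 m - G.mulVec z) := by
    intro z
    rw [Matrix.mulVec_sub, Matrix.mulVec_smul, Matrix.mulVec_mulVec, harnoldi,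
      ← Matrix.mulVec_mulVec]
  -- sketched norm identity
  have hsk : ∀ z : Fin (m + 1) → ℝ,
      eunorm (Ω.mulVec (V.mulVec z)) ^ 2 = z ⬝ᵥ z := by
    intro z
    rw [eunorm_sq, Matrix.mulVec_mulVec, Matrix.dotProduct_mulVec,
      ← Matrix.mulVec_transpose, Matrix.mulVec_mulVec, horth, Matrix.one_mulVec]
  have hmem : ∀ z : Fin (m + 1) → ℝ, V.mulVec z ∈ LinearMap.range V.mulVecLin :=
    fun z => ⟨z, rfl⟩
  set zG : Fin (m + 1) → ℝ := β • e1 m - G.mulVec yG with hzG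
  set zy : Fin (m + 1) → ℝ := β • e1 m - G.mulVec y with hzy
  have h1 := (hemb _ (hmem zG)).1
  have h2 := (hemb _ (hmem zy)).2
  rw [hsk zG] at h1
  rw [hsk zy] at h2
  -- hmin in dot-product form
  have hmin' : zG ⬝ᵥ zG ≤ zy ⬝ᵥ zy := by
    have h := hmin y
    have e1eq : eunorm (G.mulVec yG - β • e1 m) = Real.sqrt (zG ⬝ᵥ zG) := by
      rw [show G.mulVec yG - β • e1 m = -zG by simp [hzG], eunorm_neg, eunorm]
    have e2eq : eunorm (G.mulVec y - β • e1 m) = Real.sqrt (zy ⬝ᵥ zy) := by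
      rw [show G.mulVec y - β • e1 m = -zy by simp [hzy], eunorm_neg, eunorm]
    rw [e1eq, e2eq] at h
    exact (Real.sqrt_le_sqrt_iff (dp_nonneg zy)).mp h
  rw [hr yG, hr y]
  set a := eunorm (V.mulVec zG)
  set b := eunorm (V.mulVec zy)
  have key : a ^ 2 ≤ ((1 + ε) / (1 - ε)) * b ^ 2 := by
    rw [div_mul_eq_mul_div, le_div_iff₀ (by linarith)]
    nlinarith [h1, hmin', h2]
  calc a = Real.sqrt (a ^ 2) := (Real.sqrt_sq (eunorm_nonneg _)).symm
    _ ≤ Real.sqrt (((1 + ε) / (1 - ε)) * b ^ 2) := Real.sqrt_le_sqrt key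
    _ = Real.sqrt ((1 + ε) / (1 - ε)) * b := by
        rw [Real.sqrt_mul (div_nonneg (by linarith) (by linarith)), Real.sqrt_sq (eunorm_nonneg _)]
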